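/- Let G be a finite group. Then the hypercenter of G coincides with the intersection of all Sylow normalizers of G; that is, the hypercenter equals the intersection over all primes p and all Sylow p-subgroups P of G of N_G(P). -/

import Mathlib

open Subgroup

/-- A subgroup containing a Sylow subgroup for every prime is the whole group. -/
lemma Baer.eq_top_of_sylows {G : Type*} [Group G] [Finite G] {K : Subgroup G}
    (h : ∀ p : ℕ, p.Prime → ∃ P : Sylow p G, (P : Subgroup G) ≤ K) : K = ⊤ := by
  rw [← K.index_eq_one]
  by_contra hne
  have hK0 : K.index ≠ 0 := K.index_ne_zero_of_finite
  set p := K.index.minFac with hp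
  have hpp : p.Prime := Nat.minFac_prime hne
  haveI := Fact.mk hpp
  obtain ⟨P, hPK⟩ := h p hpp
  have hcard : Nat.card P = p ^ (Nat.card G).factorization p := P.card_eq_multiplicity
  have h1 : Nat.card P ∣ Nat.card K := card_dvd_of_le hPK
  have h2 : p ^ ((Nat.card G).factorization p + 1) ∣ Nat.card G := by
    have h3 : p ^ (Nat.card G).factorization p ∣ Nat.card K := hcard ▸ h1
    calc p ^ ((Nat.card G).factorization p + 1)
        ∣ Nat.card K * K.index := by rw [pow_succ]; exact mul_dvd_mul h3 K.index.minFac_dvd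
      _ = Nat.card G := K.card_mul_index
  exact Nat.pow_succ_factorization_not_dvd Nat.card_pos.ne' hpp h2


lemma Baer.le_normalizer_of_conj {G : Type*} [Group G] {K A : Subgroup G}
    (h : ∀ x ∈ K, ∀ a ∈ A, x * a * x⁻¹ ∈ A) : K ≤ Subgroup.normalizer (A : Set G) := by
  intro x hx
  rw [mem_normalizer_iff]
  intro a
  constructor
  · exact h x hx a
  · intro ha
    have h2 := h x⁻¹ (inv_mem hx) _ ha
    rwa [show x⁻¹ * (x * a * x⁻¹) * x⁻¹⁻¹ = a by group] at h2


lemma Baer.ucs_le_normalizer {G : Type*} [Group G] [Finite G] {p : ℕ} (hp : p.Prime)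
    (P : Sylow p G) (n : ℕ) : Subgroup.upperCentralSeries G n ≤ Subgroup.normalizer ((P : Subgroup G) : Set G) := by
  haveI := Fact.mk hp
  induction n with
  | zero => simp only [Subgroup.upperCentralSeries_zero]; exact bot_le
  | succ n ih =>
    intro g hg
    refine Sylow.smul_eq_iff_mem_normalizer.mp ?_
    set K : Subgroup G := Subgroup.upperCentralSeries G n ⊔ ↑P with hK
    have hPK : (P : Subgroup G) ≤ K := le_sup_right
    have hKN : K ≤ Subgroup.normalizer ((P : Subgroup G) : Set G) := sup_le ih le_normalizer
    -- conjugate of P lands in K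
    have hgP : (↑(g • P) : Subgroup G) ≤ K := by
      rw [Sylow.coe_subgroup_smul, pointwise_smul_def]
      rintro _ ⟨x, hx, rfl⟩
      have h1 : g * x * g⁻¹ * x⁻¹ ∈ Subgroup.upperCentralSeries G n :=
        Subgroup.mem_upperCentralSeries_succ_iff.mp hg x
      show g * x * g⁻¹ ∈ K
      have : g * x * g⁻¹ = (g * x * g⁻¹ * x⁻¹) * x := by group
      rw [this]
      exact K.mul_mem (le_sup_left (α := Subgroup G) h1) (hPK hx)
    -- P is normal in K
    have hnorm : (P.subtype hPK).Normal := by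
      constructor
      intro a ha k
      have hk : (k : G) ∈ Subgroup.normalizer ((P : Subgroup G) : Set G) := hKN k.2
      rw [Sylow.coe_subtype, mem_subgroupOf] at ha ⊢
      exact (mem_normalizer_iff.mp hk a).mp ha
    haveI := Sylow.unique_of_normal (P.subtype hPK) hnorm
    have heq : (g • P).subtype hgP = P.subtype hPK := Subsingleton.elim _ _
    have heq2 : ((↑(g • P) : Subgroup G)).subgroupOf K = (↑P : Subgroup G).subgroupOf K := by
      have := congrArg (fun Q : Sylow p K => (Q : Subgroup K)) heq
      simpa [Sylow.coe_subtype] using this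
    have := congrArg (fun H : Subgroup K => H.map K.subtype) heq2
    simp only [subgroupOf_map_subtype] at this
    rw [inf_eq_left.mpr hgP, inf_eq_left.mpr hPK] at this
    exact Sylow.ext this

lemma Baer.sylow_le_hypercenter {G : Type*} [Group G] [Finite G] {q : ℕ} (hq : q.Prime)
    {D : Subgroup G} [hDn : D.Normal]
    (hD : ∀ (p : ℕ), p.Prime → ∀ P : Sylow p G, D ≤ Subgroup.normalizer ((P : Subgroup G) : Set G))
    (Q₀ : Sylow q ↥D) :
    (Q₀ : Subgroup ↥D).map D.subtype ≤ ⨆ n, Subgroup.upperCentralSeries G n := by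
  haveI := Fact.mk hq
  set Q : Subgroup G := (Q₀ : Subgroup ↥D).map D.subtype with hQdef
  have hQp : IsPGroup q Q := Q₀.2.map _
  have hQle : Q ≤ D := map_subtype_le _
  -- Q₀ is normal in D, hence characteristic, hence Q is normal in G
  obtain ⟨P₁, hP₁⟩ := hQp.exists_le_sylow
  have hQ0eq : (Q₀ : Subgroup ↥D) = (P₁ : Subgroup G).subgroupOf D := by
    exact (Q₀.3 (IsPGroup.comap_subtype P₁.2) (map_le_iff_le_comap.mp hP₁)).symm
  have hQ0norm : (Q₀ : Subgroup ↥D).Normal := by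
    rw [hQ0eq]
    constructor
    intro n hn d
    rw [mem_subgroupOf] at hn ⊢
    have := (mem_normalizer_iff.mp (hD q hq P₁ d.2) (n : G)).mp hn
    simpa using this
  haveI := Sylow.characteristic_of_normal Q₀ hQ0norm
  haveI hQn : Q.Normal := by rw [hQdef]; infer_instance
  -- every p-element for p ≠ q centralizes Q
  have hcomm : ∀ (p : ℕ), p.Prime → p ≠ q → ∀ P' : Sylow p G,
      ∀ y ∈ (P' : Subgroup G), ∀ x ∈ Q, x * y = y * x := by
    intro p hpp hpq P' y hy x hx
    haveI := Fact.mk hpp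
    have hz1 : x * y * x⁻¹ * y⁻¹ ∈ Q := by
      have : x * y * x⁻¹ * y⁻¹ = x * (y * x⁻¹ * y⁻¹) := by group
      rw [this]
      exact Q.mul_mem hx (hQn.conj_mem _ (Q.inv_mem hx) y)
    have hz2 : x * y * x⁻¹ * y⁻¹ ∈ (P' : Subgroup G) := by
      have hxN : x ∈ Subgroup.normalizer ((P' : Subgroup G) : Set G) := hD p hpp P' (hQle hx)
      exact (P' : Subgroup G).mul_mem ((mem_normalizer_iff.mp hxN y).mp hy)
        ((P' : Subgroup G).inv_mem hy)
    have hdisj : Disjoint Q (P' : Subgroup G) :=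
      IsPGroup.disjoint_of_ne q p (fun h => hpq h.symm) _ _ hQp P'.2
    have : x * y * x⁻¹ * y⁻¹ = 1 := by
      have := hdisj.le_bot ⟨hz1, hz2⟩
      simpa using this
    rw [show x * y = x * y * x⁻¹ * y⁻¹ * (y * x) by group, this, one_mul]
  -- the central series
  obtain ⟨P₀, hQP₀⟩ := hQp.exists_le_sylow
  set C : ℕ → Subgroup G :=
    fun i => (Subgroup.upperCentralSeries ↥(P₀ : Subgroup G) i).map (P₀ : Subgroup G).subtype with hC
  set A : ℕ → Subgroup G := fun i => Q ⊓ C i with hA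
  have hAQ : ∀ i, A i ≤ Q := fun i => inf_le_left
  have htop : centralizer (Q : Set G) ⊔ (P₀ : Subgroup G) = ⊤ := by
    apply Baer.eq_top_of_sylows
    intro p hpp
    by_cases hpq : p = q
    · subst hpq; exact ⟨P₀, le_sup_right⟩
    · refine ⟨Classical.arbitrary (Sylow p G), le_trans ?_ le_sup_left⟩
      intro y hy
      rw [mem_centralizer_iff]
      intro x hx
      exact hcomm p hpp hpq _ y hy x hx
  have hP₀conjC : ∀ i, ∀ x ∈ (P₀ : Subgroup G), ∀ a ∈ C i, x * a * x⁻¹ ∈ C i := by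
    intro i x hx a ha
    obtain ⟨b, hb, rfl⟩ := ha
    refine ⟨⟨x, hx⟩ * b * ⟨x, hx⟩⁻¹, ?_, by simp⟩
    exact (inferInstance : (Subgroup.upperCentralSeries ↥(P₀ : Subgroup G) i).Normal).conj_mem b hb _
  have hAnormal : ∀ i, (A i).Normal := by
    intro i
    rw [← normalizer_eq_top_iff]
    refine le_antisymm le_top ?_
    rw [← htop]
    apply sup_le
    · apply Baer.le_normalizer_of_conj
      intro h hh a ha
      have : a * h = h * a := mem_centralizer_iff.mp hh a (hAQ i ha)
      rw [show h * a * h⁻¹ = h * a * h⁻¹ from rfl, ← this]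
      simpa using ha
    · apply Baer.le_normalizer_of_conj
      intro x hx a ha
      exact ⟨hQn.conj_mem a ha.1 x, hP₀conjC i x hx a ha.2⟩
  have hstep : ∀ i, ∀ a ∈ A (i + 1), ∀ x ∈ (P₀ : Subgroup G), a * x * a⁻¹ * x⁻¹ ∈ A i := by
    intro i a ha x hx
    constructor
    · have : a * x * a⁻¹ * x⁻¹ = a * (x * a⁻¹ * x⁻¹) := by group
      rw [this]
      exact Q.mul_mem ha.1 (hQn.conj_mem _ (Q.inv_mem ha.1) x)
    · obtain ⟨b, hb, rfl⟩ := ha.2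
      have := Subgroup.mem_upperCentralSeries_succ_iff.mp hb ⟨x, hx⟩
      refine ⟨_, this, by simp [commutatorElement_def]⟩
  have hAcentral : ∀ i, ∀ g : G, ∀ a ∈ A (i + 1), a * g * a⁻¹ * g⁻¹ ∈ A i := by
    intro i
    haveI := hAnormal i
    set π := QuotientGroup.mk' (A i) with hπ
    have key : ∀ g : G, ∀ a ∈ A (i + 1), g⁻¹ * a⁻¹ * g * a ∈ A i := by
      have hsub : centralizer (Q : Set G) ⊔ (P₀ : Subgroup G) ≤
          comap π (centralizer (((A (i + 1)).map π : Subgroup (G ⧸ A i)) : Set (G ⧸ A i))) := by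
        apply sup_le
        · intro h hh
          rw [mem_comap, mem_centralizer_iff]
          rintro z hz
          rw [SetLike.mem_coe, mem_map] at hz
          obtain ⟨a, ha, rfl⟩ := hz
          rw [← map_mul, ← map_mul]
          congr 1
          exact mem_centralizer_iff.mp hh a (hAQ _ ha)
        · intro x hx
          rw [mem_comap, mem_centralizer_iff]
          rintro z hz
          rw [SetLike.mem_coe, mem_map] at hz
          obtain ⟨a, ha, rfl⟩ := hz
          rw [← map_mul, ← map_mul]
          rw [QuotientGroup.mk'_eq_mk']
          refine ⟨x⁻¹ * a⁻¹ * x * a, ?_, by group⟩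
          have := hstep i a⁻¹ ((A (i + 1)).inv_mem ha) x⁻¹ ((P₀ : Subgroup G).inv_mem hx)
          have h2 := (A i).inv_mem this
          rwa [show (a⁻¹ * x⁻¹ * a⁻¹⁻¹ * x⁻¹⁻¹)⁻¹ = x⁻¹ * a⁻¹ * x * a by group] at h2
      rw [htop] at hsub
      intro g a ha
      have hg := hsub (mem_top g)
      rw [mem_comap, mem_centralizer_iff] at hg
      have := hg (π a) (by rw [SetLike.mem_coe]; exact mem_map_of_mem π ha)
      rw [← map_mul, ← map_mul, QuotientGroup.mk'_eq_mk'] at this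
      obtain ⟨z, hz, hz2⟩ := this
      have : z = (a * g)⁻¹ * (g * a) := by
        rw [← hz2]; group
      rw [this] at hz
      rwa [show (a * g)⁻¹ * (g * a) = g⁻¹ * a⁻¹ * g * a by group] at hz
    intro g a ha
    have h1 := key g⁻¹ a⁻¹ ((A (i + 1)).inv_mem ha)
    have h2 := (A i).inv_mem h1
    rwa [show (g⁻¹⁻¹ * a⁻¹⁻¹ * g⁻¹ * a⁻¹)⁻¹ = a * g * a⁻¹ * g⁻¹ by group] at h2
  have hAle : ∀ i, A i ≤ Subgroup.upperCentralSeries G i := by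
    intro i
    induction i with
    | zero =>
      intro a ha
      have h0 : a ∈ (Subgroup.upperCentralSeries ↥(P₀ : Subgroup G) 0).map (P₀ : Subgroup G).subtype :=
        ha.2
      rw [Subgroup.upperCentralSeries_zero] at h0 ⊢
      simpa using h0
    | succ i ih =>
      intro a ha
      rw [Subgroup.mem_upperCentralSeries_succ_iff]
      intro y
      exact ih (hAcentral i y a ha)
  -- conclude
  have hnil : Group.IsNilpotent ↥(P₀ : Subgroup G) := P₀.2.isNilpotent
  obtain ⟨n, hn⟩ := hnil.nilpotent'
  have hCn : C n = (P₀ : Subgroup G) := by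
    show (Subgroup.upperCentralSeries ↥(P₀ : Subgroup G) n).map (P₀ : Subgroup G).subtype = _
    rw [hn, ← MonoidHom.range_eq_map, range_subtype]
  have hAn : A n = Q := by
    show Q ⊓ C n = Q
    rw [hCn]
    exact inf_eq_left.mpr hQP₀
  calc Q = A n := hAn.symm
    _ ≤ Subgroup.upperCentralSeries G n := hAle n
    _ ≤ ⨆ m, Subgroup.upperCentralSeries G m := le_iSup _ n

/-- **Theorem (Baer).** For a finite group `G`, the hypercenter (the supremum of the upper
central series, i.e. its stabilizing term) equals the intersection of all Sylow normalizers. -/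
theorem hypercenter_eq_iInf_sylow_normalizers (G : Type*) [Group G] [Finite G] :
    (⨆ n : ℕ, _root_.upperCentralSeries G n) =
      ⨅ (p : ℕ) (_ : p.Prime) (P : Sylow p G), Subgroup.normalizer ((P : Subgroup G) : Set G) := by
  set D : Subgroup G := ⨅ (p : ℕ) (_ : p.Prime) (P : Sylow p G), Subgroup.normalizer ((P : Subgroup G) : Set G)
    with hDdef
  have hDle : ∀ (p : ℕ), p.Prime → ∀ P : Sylow p G, D ≤ Subgroup.normalizer ((P : Subgroup G) : Set G) := by
    intro p hp P
    exact le_trans (iInf_le _ p) (le_trans (iInf_le _ hp) (iInf_le _ P))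
  haveI hDn : D.Normal := by
    constructor
    intro d hd g
    rw [hDdef, Subgroup.mem_iInf]
    intro p
    rw [Subgroup.mem_iInf]
    intro hp
    rw [Subgroup.mem_iInf]
    intro P
    refine Sylow.smul_eq_iff_mem_normalizer.mp ?_
    have h1 : d • (g⁻¹ • P) = g⁻¹ • P :=
      Sylow.smul_eq_iff_mem_normalizer.mpr (hDle p hp (g⁻¹ • P) hd)
    calc (g * d * g⁻¹) • P = g • d • g⁻¹ • P := by rw [mul_smul, mul_smul]
      _ = g • g⁻¹ • P := by rw [h1]
      _ = P := smul_inv_smul g P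
  apply le_antisymm
  · exact iSup_le fun n => le_iInf fun p => le_iInf fun hp => le_iInf fun P =>
      Baer.ucs_le_normalizer hp P n
  · have hcomap : Subgroup.comap D.subtype (⨆ n, Subgroup.upperCentralSeries G n) = ⊤ :=
      Baer.eq_top_of_sylows fun q hq =>
        ⟨Classical.arbitrary (Sylow q ↥D),
          Subgroup.map_le_iff_le_comap.mp (Baer.sylow_le_hypercenter hq hDle _)⟩
    intro x hx
    have : (⟨x, hx⟩ : ↥D) ∈ Subgroup.comap D.subtype (⨆ n, Subgroup.upperCentralSeries G n) := by
      rw [hcomap]; trivial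
    exact this
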